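/- Let f : [0,1] → [0,1] be strictly increasing with f(0) = 0 and f(1) = 1, differentiable with Lipschitz-continuous derivative f', and set t^n_i := f(i/n) for 0 ≤ i ≤ n. Then, as n → ∞, sup over 1 ≤ m ≤ M_n of | n^{−1/2} · E[( Σ_{i=(2m−2)k_n}^{(2m−1)k_n} (W_{t^n_{i+k_n}} − W_{t^n_i}) )²] − (2c³/3) · f'((2m−2)k_n/n) | tends to 0. -/

import Mathlib

open MeasureTheory ProbabilityTheory Filter Finset
open scoped ProbabilityTheory ENNReal NNReal BigOperators

namespace DepNoise

/-- `k_n := ⌊c√n⌋`. -/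
noncomputable def kfloor (c : ℝ) (n : ℕ) : ℕ := Nat.floor (c * Real.sqrt n)

/-- `M_n := ⌊√n / (2c)⌋`. -/
noncomputable def Mn (c : ℝ) (n : ℕ) : ℕ := Nat.floor (Real.sqrt n / (2 * c))




lemma sum_min_six (k : ℕ) :
    (∑ i ∈ range (k+1), ∑ j ∈ range (k+1), min i j) * 6 = k*(k+1)*(2*k+1) := by
  induction k with
  | zero => simp
  | succ k ih =>
    have gauss : (∑ i ∈ range (k+1), i) * 2 = (k+1) * k := Finset.sum_range_id_mul_two (k+1)
    have t1 : ∀ i ∈ range (k+1),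
        ∑ j ∈ range (k+1+1), min i j = (∑ j ∈ range (k+1), min i j) + i := by
      intro i hi
      have hi' := Finset.mem_range.mp hi
      rw [Finset.sum_range_succ]
      have : min i (k+1) = i := by omega
      rw [this]
    have t2 : ∑ j ∈ range (k+1+1), min (k+1) j = (∑ j ∈ range (k+1), j) + (k+1) := by
      rw [Finset.sum_range_succ, min_self]
      congr 1
      exact Finset.sum_congr rfl fun j hj => by
        have := Finset.mem_range.mp hj; omega
    have main : ∑ i ∈ range (k+1+1), ∑ j ∈ range (k+1+1), min i j
        = (∑ i ∈ range (k+1), ∑ j ∈ range (k+1), min i j)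
          + (∑ i ∈ range (k+1), i) + ((∑ j ∈ range (k+1), j) + (k+1)) := by
      rw [Finset.sum_range_succ, t2, Finset.sum_congr rfl t1, Finset.sum_add_distrib]
    rw [main]
    nlinarith [ih, gauss]

lemma sum_max_six (k : ℕ) :
    (∑ i ∈ range (k+1), ∑ j ∈ range (k+1), max i j) * 6
      = 2*(k*(k+1)*(2*k+1)) + 3*(k*(k+1)) := by
  induction k with
  | zero => simp
  | succ k ih =>
    have t1 : ∀ i ∈ range (k+1),
        ∑ j ∈ range (k+1+1), max i j = (∑ j ∈ range (k+1), max i j) + (k+1) := by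
      intro i hi
      have hi' := Finset.mem_range.mp hi
      rw [Finset.sum_range_succ]
      have : max i (k+1) = k+1 := by omega
      rw [this]
    have t2 : ∑ j ∈ range (k+1+1), max (k+1) j = (k+1)*(k+1) + (k+1) := by
      rw [Finset.sum_range_succ, max_self]
      congr 1
      rw [Finset.sum_congr rfl (fun j hj => by
        have := Finset.mem_range.mp hj
        show max (k+1) j = k+1
        omega), Finset.sum_const, Finset.card_range, smul_eq_mul]
    have main : ∑ i ∈ range (k+1+1), ∑ j ∈ range (k+1+1), max i j
        = (∑ i ∈ range (k+1), ∑ j ∈ range (k+1), max i j)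
          + (k+1)*(k+1) + ((k+1)*(k+1) + (k+1)) := by
      rw [Finset.sum_range_succ, t2, Finset.sum_congr rfl t1, Finset.sum_add_distrib,
        Finset.sum_const, Finset.card_range, smul_eq_mul]
    rw [main]
    nlinarith [ih]

lemma sum_gap (k : ℕ) :
    (∑ i ∈ range (k+1), ∑ j ∈ range (k+1), ((min i j + k - max i j : ℕ) : ℝ))
      = (k*(k+1)*(2*k+1) : ℝ)/3 := by
  have e1 : (∑ i ∈ range (k+1), ∑ j ∈ range (k+1), ((min i j + k - max i j : ℕ) : ℝ))
      = ∑ i ∈ range (k+1), ∑ j ∈ range (k+1),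
          (((min i j : ℕ) : ℝ) + (k : ℝ) - ((max i j : ℕ) : ℝ)) := by
    refine Finset.sum_congr rfl fun i hi => Finset.sum_congr rfl fun j hj => ?_
    have hi' := Finset.mem_range.mp hi
    have hj' := Finset.mem_range.mp hj
    have hle : max i j ≤ min i j + k := by omega
    rw [Nat.cast_sub hle]; push_cast; ring
  have e2 : (∑ i ∈ range (k+1), ∑ j ∈ range (k+1),
          (((min i j : ℕ) : ℝ) + (k : ℝ) - ((max i j : ℕ) : ℝ)))
      = ((∑ i ∈ range (k+1), ∑ j ∈ range (k+1), min i j : ℕ) : ℝ)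
        + ((k:ℝ)+1)^2 * k - ((∑ i ∈ range (k+1), ∑ j ∈ range (k+1), max i j : ℕ) : ℝ) := by
    simp only [Finset.sum_add_distrib, Finset.sum_sub_distrib, Finset.sum_const,
      Finset.card_range, nsmul_eq_mul, ← Nat.cast_sum]
    push_cast; ring
  rw [e1, e2]
  have hA := sum_min_six k
  have hB := sum_max_six k
  have hA' : ((∑ i ∈ range (k+1), ∑ j ∈ range (k+1), min i j : ℕ) : ℝ) * 6
      = k*(k+1)*(2*k+1) := by exact_mod_cast congrArg (Nat.cast : ℕ → ℝ) hA
  have hB' : ((∑ i ∈ range (k+1), ∑ j ∈ range (k+1), max i j : ℕ) : ℝ) * 6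
      = 2*(k*(k+1)*(2*k+1)) + 3*(k*(k+1)) := by exact_mod_cast congrArg (Nat.cast : ℕ → ℝ) hB
  push_cast at hA' hB' ⊢
  linarith



lemma integrable_mul2 {Ω : Type*} [MeasureSpace Ω] [IsProbabilityMeasure (ℙ : Measure Ω)]
    {g h : Ω → ℝ} (hg : MemLp g 2 ℙ) (hh : MemLp h 2 ℙ) :
    Integrable (fun ω => g ω * h ω) ℙ := by
  have h1 : Integrable (fun ω => (g ω + h ω)^2) ℙ := (hg.add hh).integrable_sq
  have h2 : Integrable (fun ω => g ω ^2) ℙ := hg.integrable_sq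
  have h3 : Integrable (fun ω => h ω ^2) ℙ := hh.integrable_sq
  have e : (fun ω => g ω * h ω) = fun ω => (((g ω + h ω)^2 - g ω^2) - h ω^2)/2 := by
    funext ω; ring
  rw [e]
  exact ((h1.sub h2).sub h3).div_const 2

lemma cov_incr {Ω : Type*} [MeasureSpace Ω] [IsProbabilityMeasure (ℙ : Measure Ω)]
    (W : ℝ → Ω → ℝ) (hW2 : ∀ t : ℝ, 0 ≤ t → MemLp (W t) 2 ℙ)
    (hWcov : ∀ s t : ℝ, 0 ≤ s → 0 ≤ t → ∫ ω, W s ω * W t ω ∂ℙ = min s t)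
    {s t u v : ℝ} (hs : 0 ≤ s) (ht : 0 ≤ t) (hu : 0 ≤ u) (hv : 0 ≤ v) :
    ∫ ω, (W s ω - W t ω) * (W u ω - W v ω) ∂ℙ
      = min s u - min s v - min t u + min t v := by
  have h1 := integrable_mul2 (hW2 s hs) (hW2 u hu)
  have h2 := integrable_mul2 (hW2 s hs) (hW2 v hv)
  have h3 := integrable_mul2 (hW2 t ht) (hW2 u hu)
  have h4 := integrable_mul2 (hW2 t ht) (hW2 v hv)
  have key : ∫ ω, (W s ω - W t ω) * (W u ω - W v ω) ∂ℙ
      = ((∫ ω, W s ω * W u ω ∂ℙ) - ∫ ω, W s ω * W v ω ∂ℙ)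
        - ((∫ ω, W t ω * W u ω ∂ℙ) - ∫ ω, W t ω * W v ω ∂ℙ) := by
    calc ∫ ω, (W s ω - W t ω) * (W u ω - W v ω) ∂ℙ
        = ∫ ω, (W s ω * W u ω - W s ω * W v ω) - (W t ω * W u ω - W t ω * W v ω) ∂ℙ := by
          congr 1; funext ω; ring
      _ = (∫ ω, W s ω * W u ω - W s ω * W v ω ∂ℙ)
            - ∫ ω, W t ω * W u ω - W t ω * W v ω ∂ℙ := integral_sub (h1.sub h2) (h3.sub h4)
      _ = ((∫ ω, W s ω * W u ω ∂ℙ) - ∫ ω, W s ω * W v ω ∂ℙ)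
            - ((∫ ω, W t ω * W u ω ∂ℙ) - ∫ ω, W t ω * W v ω ∂ℙ) := by
          rw [integral_sub h1 h2, integral_sub h3 h4]
  rw [key, hWcov _ _ hs hu, hWcov _ _ hs hv, hWcov _ _ ht hu, hWcov _ _ ht hv]
  ring

lemma taylor_bound (f f' : ℝ → ℝ)
    (hderiv : ∀ x ∈ Set.Icc (0 : ℝ) 1, HasDerivAt f (f' x) x)
    (L : NNReal) (hlip : LipschitzOnWith L f' (Set.Icc 0 1))
    {r δ x y : ℝ} (hr : r ∈ Set.Icc (0:ℝ) 1) (hx : x ∈ Set.Icc (0:ℝ) 1)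
    (hy : y ∈ Set.Icc (0:ℝ) 1) (hyx : y ≤ x)
    (hrx : |x - r| ≤ δ) (hry : |y - r| ≤ δ) :
    |f x - f y - f' r * (x - y)| ≤ L * δ * (x - y) := by
  have hδ : 0 ≤ δ := le_trans (abs_nonneg _) hrx
  rcases eq_or_lt_of_le hyx with h | h
  · subst h; simp
  · have hsub : Set.Icc y x ⊆ Set.Icc (0:ℝ) 1 := Set.Icc_subset_Icc hy.1 hx.2
    have hcont : ContinuousOn f (Set.Icc y x) := fun z hz =>
      ((hderiv z (hsub hz)).continuousAt).continuousWithinAt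
    obtain ⟨ξ, hξ, hslope⟩ := exists_hasDerivAt_eq_slope f f' h hcont
      (fun z hz => hderiv z (hsub (Set.Ioo_subset_Icc_self hz)))
    have hval : f' ξ * (x - y) = f x - f y := by
      rw [hslope, div_mul_cancel₀ _ (sub_ne_zero.mpr h.ne')]
    have hξmem : ξ ∈ Set.Icc (0:ℝ) 1 := hsub (Set.Ioo_subset_Icc_self hξ)
    have hlipd : |f' ξ - f' r| ≤ (L : ℝ) * |ξ - r| := by
      have := hlip.dist_le_mul ξ hξmem r hr
      simpa [Real.dist_eq] using this
    have hξr : |ξ - r| ≤ δ := by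
      rw [abs_le] at hrx hry ⊢
      constructor
      · linarith [hξ.1]
      · linarith [hξ.2]
    calc |f x - f y - f' r * (x - y)| = |(f' ξ - f' r) * (x - y)| := by
          rw [← hval]; congr 1; ring
      _ = |f' ξ - f' r| * |x - y| := abs_mul _ _
      _ ≤ ((L:ℝ) * δ) * (x - y) := by
          have h1 : |x - y| = x - y := abs_of_pos (by linarith)
          rw [h1]
          refine mul_le_mul ?_ le_rfl (by linarith)
            (mul_nonneg (NNReal.coe_nonneg L) hδ)
          exact le_trans hlipd (mul_le_mul_of_nonneg_left hξr (NNReal.coe_nonneg L))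




lemma cube_poly_up {t x : ℝ} (h1 : 1 ≤ t) (htx : t ≤ x) (hx1 : 1 ≤ x) :
    t * (t + 1) * (2 * t + 1) - 2 * x ^ 3 ≤ 12 * x ^ 2 := by
  nlinarith [sq_nonneg x, sq_nonneg t, sq_nonneg (x - t), mul_nonneg (by linarith : (0:ℝ) ≤ x - t) (by nlinarith : (0:ℝ) ≤ x ^ 2 + x * t + t ^ 2)]

lemma cube_poly_lo {t x : ℝ} (h1 : 1 ≤ t) (hxt : x < t + 1) (hx1 : 1 ≤ x) :
    -(12 * x ^ 2) ≤ t * (t + 1) * (2 * t + 1) - 2 * x ^ 3 := by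
  nlinarith [sq_nonneg x, sq_nonneg t, mul_nonneg (by linarith : (0:ℝ) ≤ t + 1 - x) (by nlinarith : (0:ℝ) ≤ (t+1) ^ 2 + (t+1) * x + x ^ 2)]

lemma key_poly_up {t x : ℝ} (h1 : 1 ≤ t) (htx : t ≤ x) :
    (t + 1) ^ 2 * t ≤ 4 * x ^ 3 := by
  nlinarith [sq_nonneg (t - 1), mul_nonneg (by linarith : (0:ℝ) ≤ x - t) (by nlinarith : (0:ℝ) ≤ x ^ 2 + x * t + t ^ 2)]

set_option maxHeartbeats 1600000

/-- time-changed version: uniformly over `1 ≤ m ≤ M_n`,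
`n^{−1/2} E[(Σ_i (W_{t^n_{i+k_n}} − W_{t^n_i}))²]` is asymptotically
`(2c³/3) f'((2m−2)k_n/n)` where `t^n_i = f(i/n)`. -/
theorem brownian_preavg_second_moment_irregular
    {Ω : Type*} [MeasureSpace Ω] [IsProbabilityMeasure (ℙ : Measure Ω)]
    (W : ℝ → Ω → ℝ)
    (hW2 : ∀ t : ℝ, 0 ≤ t → MemLp (W t) 2 ℙ)
    (hWmean : ∀ t : ℝ, 0 ≤ t → ∫ ω, W t ω ∂ℙ = 0)
    (hWcov : ∀ s t : ℝ, 0 ≤ s → 0 ≤ t → ∫ ω, W s ω * W t ω ∂ℙ = min s t)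
    (c : ℝ) (hc : 0 < c)
    (f f' : ℝ → ℝ)
    (hmono : StrictMonoOn f (Set.Icc 0 1))
    (hmaps : Set.MapsTo f (Set.Icc 0 1) (Set.Icc 0 1))
    (hf0 : f 0 = 0) (hf1 : f 1 = 1)
    (hderiv : ∀ x ∈ Set.Icc (0 : ℝ) 1, HasDerivAt f (f' x) x)
    (L : NNReal) (hlip : LipschitzOnWith L f' (Set.Icc 0 1)) :
    ∀ ε : ℝ, 0 < ε → ∃ N : ℕ, ∀ n ≥ N, ∀ m : ℕ, 1 ≤ m → m ≤ Mn c n →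
      |(n : ℝ) ^ (-((1 : ℝ) / 2)) *
          ∫ ω, (∑ i ∈ Finset.Icc ((2 * m - 2) * kfloor c n) ((2 * m - 1) * kfloor c n),
              (W (f (((i + kfloor c n : ℕ) : ℝ) / (n : ℝ))) ω
                - W (f ((i : ℝ) / (n : ℝ))) ω)) ^ 2 ∂ℙ
        - (2 * c ^ 3 / 3) * f' ((((2 * m - 2) * kfloor c n : ℕ) : ℝ) / (n : ℝ))| < ε := by
  intro ε hε
  set B : ℝ := |f' 0| + (L : ℝ) with hBdef
  have hB0 : 0 ≤ B := by positivity
  set C : ℝ := 8 * (L : ℝ) * c ^ 4 + 4 * c ^ 2 * B + 1 with hCdef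
  have hC1 : 1 ≤ C := by
    have h8 : 0 ≤ 8 * (L : ℝ) * c ^ 4 := by positivity
    have h4 : 0 ≤ 4 * c ^ 2 * B := by positivity
    rw [hCdef]; linarith
  have hC0 : 0 < C := by linarith
  refine ⟨max (Nat.ceil ((C / ε) ^ 2) + 1) (Nat.ceil ((1 / c) ^ 2) + 1), ?_⟩
  intro n hn m hm1 hm2
  -- basic numeric facts
  have hn1 : 1 ≤ n := le_trans (by omega) (le_trans (le_max_left _ _) hn)
  have hn0 : (0 : ℝ) < n := by exact_mod_cast hn1
  set sn : ℝ := Real.sqrt n with hsndef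
  have hsn0 : 0 < sn := Real.sqrt_pos.mpr hn0
  have hsn : sn * sn = (n : ℝ) := Real.mul_self_sqrt (Nat.cast_nonneg n)
  have hcs : 1 ≤ c * sn := by
    have h1 : ((Nat.ceil ((1 / c) ^ 2) + 1 : ℕ) : ℝ) ≤ (n : ℝ) := by
      exact_mod_cast le_trans (le_max_right _ _) hn
    have h2 : (1 / c) ^ 2 ≤ (n : ℝ) := by
      have := Nat.le_ceil ((1 / c) ^ 2)
      push_cast at h1
      linarith
    have h3 : 1 / c ≤ sn := by
      have := Real.sqrt_le_sqrt h2
      rwa [Real.sqrt_sq (by positivity : (0:ℝ) ≤ 1 / c)] at this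
    calc (1 : ℝ) = c * (1 / c) := by field_simp
      _ ≤ c * sn := by nlinarith
  have hCe : C / sn < ε := by
    have h1 : ((Nat.ceil ((C / ε) ^ 2) + 1 : ℕ) : ℝ) ≤ (n : ℝ) := by
      exact_mod_cast le_trans (le_max_left _ _) hn
    have h2 : (C / ε) ^ 2 < (n : ℝ) := by
      have := Nat.le_ceil ((C / ε) ^ 2)
      push_cast at h1
      linarith
    have h3 : C / ε < sn := by
      have := Real.sqrt_lt_sqrt (by positivity) h2
      rwa [Real.sqrt_sq (by positivity : (0:ℝ) ≤ C / ε)] at this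
    rw [div_lt_iff₀ hsn0]
    calc C = (C / ε) * ε := by field_simp
      _ < ε * sn := by nlinarith
  set k : ℕ := kfloor c n with hkdef
  have hk1 : 1 ≤ k := by
    apply Nat.le_floor
    exact_mod_cast hcs
  have hkub : (k : ℝ) ≤ c * sn := Nat.floor_le (by positivity)
  have hklb : c * sn < (k : ℝ) + 1 := by
    have := Nat.lt_floor_add_one (c * sn)
    exact_mod_cast this
  have hkr1 : (1 : ℝ) ≤ (k : ℝ) := by exact_mod_cast hk1
  have hmR : (m : ℝ) ≤ sn / (2 * c) := by
    calc (m : ℝ) ≤ ((Mn c n : ℕ) : ℝ) := by exact_mod_cast hm2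
      _ ≤ sn / (2 * c) := Nat.floor_le (by positivity)
  set a : ℕ := (2 * m - 2) * k with hadef
  have hidx : (2 * m - 1) * k = a + k := by
    have h2m : 2 * m - 1 = (2 * m - 2) + 1 := by omega
    rw [hadef, h2m, add_mul, one_mul]
  have h2mk : a + k + k = 2 * m * k := by
    have h2 : (2 * m - 2) + 2 = 2 * m := by omega
    calc a + k + k = ((2 * m - 2) + 2) * k := by rw [hadef]; ring
      _ = 2 * m * k := by rw [h2]
  have hnk : a + k + k ≤ n := by
    have hr : ((2 * m * k : ℕ) : ℝ) ≤ (n : ℝ) := by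
      push_cast
      calc (2 : ℝ) * m * k ≤ 2 * (sn / (2 * c)) * (c * sn) := by
            apply mul_le_mul
            · nlinarith
            · exact hkub
            · positivity
            · positivity
        _ = sn * sn := by field_simp
        _ = (n : ℝ) := hsn
    rw [h2mk]
    exact_mod_cast hr
  clear_value sn k a
  -- membership facts
  have hx01 : ∀ i : ℕ, i ≤ n → (i : ℝ) / n ∈ Set.Icc (0 : ℝ) 1 := by
    intro i hi
    constructor
    · positivity
    · rw [div_le_one hn0]; exact_mod_cast hi
  have hf01 : ∀ i : ℕ, i ≤ n → f ((i : ℝ) / n) ∈ Set.Icc (0 : ℝ) 1 :=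
    fun i hi => hmaps (hx01 i hi)
  have hf0' : ∀ i : ℕ, i ≤ n → (0 : ℝ) ≤ f ((i : ℝ) / n) := fun i hi => (hf01 i hi).1
  -- monotonicity of mins
  have hfm : ∀ p q : ℕ, p ≤ q → q ≤ n →
      min (f ((p : ℝ) / n)) (f ((q : ℝ) / n)) = f ((p : ℝ) / n) := by
    intro p q hpq hqn
    refine min_eq_left (hmono.monotoneOn (hx01 p (le_trans hpq hqn)) (hx01 q hqn) ?_)
    exact (div_le_div_iff_of_pos_right hn0).mpr (by exact_mod_cast hpq)
  have hfm2 : ∀ p q : ℕ, q ≤ p → p ≤ n →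
      min (f ((p : ℝ) / n)) (f ((q : ℝ) / n)) = f ((q : ℝ) / n) := by
    intro p q hqp hpn
    rw [min_comm]
    exact hfm q p hqp hpn
  -- L² membership and integrability
  have hMem : ∀ i : ℕ, i + k ≤ n →
      MemLp (fun ω => W (f (((i + k : ℕ) : ℝ) / n)) ω - W (f ((i : ℝ) / n)) ω) 2 ℙ := by
    intro i hi
    exact (hW2 _ (hf0' (i + k) hi)).sub (hW2 _ (hf0' i (by omega)))
  have hIcck : ∀ i ∈ Finset.Icc a (a + k), i + k ≤ n := by
    intro i hi
    have := Finset.mem_Icc.mp hi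
    omega
  have hInt : ∀ i ∈ Finset.Icc a (a + k), ∀ j ∈ Finset.Icc a (a + k),
      Integrable (fun ω => (W (f (((i + k : ℕ) : ℝ) / n)) ω - W (f ((i : ℝ) / n)) ω)
        * (W (f (((j + k : ℕ) : ℝ) / n)) ω - W (f ((j : ℝ) / n)) ω)) ℙ := by
    intro i hi j hj
    exact integrable_mul2 (hMem i (hIcck i hi)) (hMem j (hIcck j hj))
  have hIcalc : ∫ ω, (∑ i ∈ Finset.Icc a (a + k),
        (W (f (((i + k : ℕ) : ℝ) / n)) ω - W (f ((i : ℝ) / n)) ω)) ^ 2 ∂ℙ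
      = ∑ i ∈ Finset.Icc a (a + k), ∑ j ∈ Finset.Icc a (a + k),
          ∫ ω, (W (f (((i + k : ℕ) : ℝ) / n)) ω - W (f ((i : ℝ) / n)) ω)
            * (W (f (((j + k : ℕ) : ℝ) / n)) ω - W (f ((j : ℝ) / n)) ω) ∂ℙ := by
    calc ∫ ω, (∑ i ∈ Finset.Icc a (a + k),
          (W (f (((i + k : ℕ) : ℝ) / n)) ω - W (f ((i : ℝ) / n)) ω)) ^ 2 ∂ℙ
        = ∫ ω, ∑ i ∈ Finset.Icc a (a + k), ∑ j ∈ Finset.Icc a (a + k),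
            (W (f (((i + k : ℕ) : ℝ) / n)) ω - W (f ((i : ℝ) / n)) ω)
              * (W (f (((j + k : ℕ) : ℝ) / n)) ω - W (f ((j : ℝ) / n)) ω) ∂ℙ := by
          congr 1; funext ω; rw [sq, Finset.sum_mul_sum]
      _ = ∑ i ∈ Finset.Icc a (a + k), ∫ ω, ∑ j ∈ Finset.Icc a (a + k),
            (W (f (((i + k : ℕ) : ℝ) / n)) ω - W (f ((i : ℝ) / n)) ω)
              * (W (f (((j + k : ℕ) : ℝ) / n)) ω - W (f ((j : ℝ) / n)) ω) ∂ℙ :=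
          integral_finset_sum _ (fun i hi =>
            integrable_finset_sum _ (fun j hj => hInt i hi j hj))
      _ = ∑ i ∈ Finset.Icc a (a + k), ∑ j ∈ Finset.Icc a (a + k),
            ∫ ω, (W (f (((i + k : ℕ) : ℝ) / n)) ω - W (f ((i : ℝ) / n)) ω)
              * (W (f (((j + k : ℕ) : ℝ) / n)) ω - W (f ((j : ℝ) / n)) ω) ∂ℙ :=
          Finset.sum_congr rfl fun i hi =>
            integral_finset_sum _ (fun j hj => hInt i hi j hj)
  have hpair : ∀ i ∈ Finset.Icc a (a + k), ∀ j ∈ Finset.Icc a (a + k),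
      (∫ ω, (W (f (((i + k : ℕ) : ℝ) / n)) ω - W (f ((i : ℝ) / n)) ω)
        * (W (f (((j + k : ℕ) : ℝ) / n)) ω - W (f ((j : ℝ) / n)) ω) ∂ℙ)
      = f (((min i j + k : ℕ) : ℝ) / n) - f (((max i j : ℕ) : ℝ) / n) := by
    intro i hi j hj
    obtain ⟨hia, hib⟩ := Finset.mem_Icc.mp hi
    obtain ⟨hja, hjb⟩ := Finset.mem_Icc.mp hj
    rw [cov_incr W hW2 hWcov (hf0' (i + k) (by omega)) (hf0' i (by omega))
      (hf0' (j + k) (by omega)) (hf0' j (by omega))]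
    rcases le_total i j with hij | hij
    · rw [hfm (i + k) (j + k) (by omega) (by omega), hfm2 (i + k) j (by omega) (by omega),
        hfm i (j + k) (by omega) (by omega), hfm i j hij (by omega),
        min_eq_left hij, max_eq_right hij]
      ring
    · rw [hfm2 (i + k) (j + k) (by omega) (by omega), hfm2 (i + k) j (by omega) (by omega),
        hfm i (j + k) (by omega) (by omega), hfm2 i j hij (by omega),
        min_eq_right hij, max_eq_left hij]
      ring
  have hre : (∑ i ∈ Finset.Icc a (a + k), ∑ j ∈ Finset.Icc a (a + k),
        (f (((min i j + k : ℕ) : ℝ) / n) - f (((max i j : ℕ) : ℝ) / n)))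
      = ∑ i ∈ range (k + 1), ∑ j ∈ range (k + 1),
          (f (((a + min i j + k : ℕ) : ℝ) / n) - f (((a + max i j : ℕ) : ℝ) / n)) := by
    have hIccIco : Finset.Icc a (a + k) = Finset.Ico a (a + k + 1) := by
      rw [Finset.Ico_add_one_right_eq_Icc]
    have hlen : a + k + 1 - a = k + 1 := by omega
    rw [hIccIco, Finset.sum_Ico_eq_sum_range, hlen]
    refine Finset.sum_congr rfl fun i _ => ?_
    rw [Finset.sum_Ico_eq_sum_range, hlen]
    refine Finset.sum_congr rfl fun j _ => ?_
    have e1 : min (a + i) (a + j) + k = a + min i j + k := by omega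
    have e2 : max (a + i) (a + j) = a + max i j := by omega
    rw [e1, e2]
  -- Taylor estimate for each term
  have hr01 : (a : ℝ) / n ∈ Set.Icc (0 : ℝ) 1 := hx01 a (by omega)
  have hterm : ∀ i ∈ range (k + 1), ∀ j ∈ range (k + 1),
      |f (((a + min i j + k : ℕ) : ℝ) / n) - f (((a + max i j : ℕ) : ℝ) / n)
        - f' ((a : ℝ) / n) * (((min i j + k - max i j : ℕ) : ℝ) / n)|
      ≤ (L : ℝ) * (2 * c / sn) * ((k : ℝ) / n) := by
    intro i hi j hj
    have hi' := Finset.mem_range.mp hi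
    have hj' := Finset.mem_range.mp hj
    have hqp : a + max i j ≤ a + min i j + k := by omega
    have hpn : a + min i j + k ≤ n := by omega
    have hxy : ((a + min i j + k : ℕ) : ℝ) / n - ((a + max i j : ℕ) : ℝ) / n
        = ((min i j + k - max i j : ℕ) : ℝ) / n := by
      rw [div_sub_div_same, ← Nat.cast_sub hqp]
      congr 2
      omega
    have hkn : 2 * (k : ℝ) / n ≤ 2 * c / sn := by
      rw [← hsn, div_le_div_iff₀ (by positivity) hsn0]
      nlinarith
    have hcast2 : ((a + 2 * k : ℕ) : ℝ) = (a : ℝ) + 2 * (k : ℝ) := by push_cast; ring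
    have habsx : |((a + min i j + k : ℕ) : ℝ) / n - (a : ℝ) / n| ≤ 2 * c / sn := by
      rw [div_sub_div_same, abs_of_nonneg (div_nonneg (sub_nonneg.mpr
        (by exact_mod_cast (by omega : a ≤ a + min i j + k))) hn0.le)]
      calc (((a + min i j + k : ℕ) : ℝ) - (a : ℝ)) / n ≤ 2 * (k : ℝ) / n := by
            apply (div_le_div_iff_of_pos_right hn0).mpr
            have h3 : ((a + min i j + k : ℕ) : ℝ) ≤ ((a + 2 * k : ℕ) : ℝ) := by
              exact_mod_cast (by omega : a + min i j + k ≤ a + 2 * k)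
            rw [hcast2] at h3
            linarith
        _ ≤ 2 * c / sn := hkn
    have habsy : |((a + max i j : ℕ) : ℝ) / n - (a : ℝ) / n| ≤ 2 * c / sn := by
      rw [div_sub_div_same, abs_of_nonneg (div_nonneg (sub_nonneg.mpr
        (by exact_mod_cast (by omega : a ≤ a + max i j))) hn0.le)]
      calc (((a + max i j : ℕ) : ℝ) - (a : ℝ)) / n ≤ 2 * (k : ℝ) / n := by
            apply (div_le_div_iff_of_pos_right hn0).mpr
            have h3 : ((a + max i j : ℕ) : ℝ) ≤ ((a + 2 * k : ℕ) : ℝ) := by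
              exact_mod_cast (by omega : a + max i j ≤ a + 2 * k)
            rw [hcast2] at h3
            linarith
        _ ≤ 2 * c / sn := hkn
    have hyx : ((a + max i j : ℕ) : ℝ) / n ≤ ((a + min i j + k : ℕ) : ℝ) / n :=
      (div_le_div_iff_of_pos_right hn0).mpr (by exact_mod_cast hqp)
    have htay := taylor_bound f f' hderiv L hlip hr01
      (hx01 (a + min i j + k) hpn) (hx01 (a + max i j) (le_trans hqp hpn))
      hyx habsx habsy
    rw [hxy] at htay
    refine le_trans htay ?_
    have hgap : ((min i j + k - max i j : ℕ) : ℝ) / n ≤ (k : ℝ) / n := by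
      apply (div_le_div_iff_of_pos_right hn0).mpr
      exact_mod_cast (by omega : min i j + k - max i j ≤ k)
    exact mul_le_mul_of_nonneg_left hgap (by positivity)
  -- sum of the gaps
  have hKc : (∑ i ∈ range (k + 1), ∑ j ∈ range (k + 1),
        ((min i j + k - max i j : ℕ) : ℝ))
      = ((k : ℝ) * ((k : ℝ) + 1) * (2 * (k : ℝ) + 1)) / 3 := by
    have := sum_gap k
    push_cast at this ⊢
    linarith
  -- abbreviations
  have hpow : (n : ℝ) ^ (-((1 : ℝ) / 2)) = sn⁻¹ := by
    rw [Real.rpow_neg (Nat.cast_nonneg n), hsndef, Real.sqrt_eq_rpow]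
  set T := ∑ i ∈ range (k + 1), ∑ j ∈ range (k + 1),
      (f (((a + min i j + k : ℕ) : ℝ) / n) - f (((a + max i j : ℕ) : ℝ) / n)) with hTdef
  set Kc := ∑ i ∈ range (k + 1), ∑ j ∈ range (k + 1),
      ((min i j + k - max i j : ℕ) : ℝ) with hKcdef
  have hTval : (∫ ω, (∑ i ∈ Finset.Icc a (a + k),
        (W (f (((i + k : ℕ) : ℝ) / n)) ω - W (f ((i : ℝ) / n)) ω)) ^ 2 ∂ℙ) = T :=
    calc (∫ ω, (∑ i ∈ Finset.Icc a (a + k),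
          (W (f (((i + k : ℕ) : ℝ) / n)) ω - W (f ((i : ℝ) / n)) ω)) ^ 2 ∂ℙ)
        = ∑ i ∈ Finset.Icc a (a + k), ∑ j ∈ Finset.Icc a (a + k),
            ∫ ω, (W (f (((i + k : ℕ) : ℝ) / n)) ω - W (f ((i : ℝ) / n)) ω)
              * (W (f (((j + k : ℕ) : ℝ) / n)) ω - W (f ((j : ℝ) / n)) ω) ∂ℙ := hIcalc
      _ = ∑ i ∈ Finset.Icc a (a + k), ∑ j ∈ Finset.Icc a (a + k),
            (f (((min i j + k : ℕ) : ℝ) / n) - f (((max i j : ℕ) : ℝ) / n)) :=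
          Finset.sum_congr rfl fun i hi => Finset.sum_congr rfl fun j hj => hpair i hi j hj
      _ = T := hre
  set P := f' ((a : ℝ) / n) with hPdef
  have hP : |P| ≤ B := by
    have h0 : (0 : ℝ) ∈ Set.Icc (0 : ℝ) 1 := by norm_num
    have hd := hlip.dist_le_mul ((a : ℝ) / n) hr01 0 h0
    rw [Real.dist_eq, Real.dist_eq, sub_zero] at hd
    have hr1 : |(a : ℝ) / n| ≤ 1 := by
      rw [abs_of_nonneg hr01.1]; exact hr01.2
    calc |P| = |(P - f' 0) + f' 0| := by ring_nf
      _ ≤ |P - f' 0| + |f' 0| := abs_add_le _ _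
      _ ≤ (L : ℝ) * 1 + |f' 0| := by
          have h2 : |P - f' 0| ≤ (L : ℝ) * 1 :=
            le_trans hd (mul_le_mul_of_nonneg_left hr1 (NNReal.coe_nonneg L))
          linarith
      _ = B := by rw [hBdef]; ring
  have hsum1 : |T - P * (Kc / n)| ≤ ((k : ℝ) + 1) ^ 2 * ((L : ℝ) * (2 * c / sn) * ((k : ℝ) / n)) := by
    have hsplit : T - P * (Kc / n)
        = ∑ i ∈ range (k + 1), ∑ j ∈ range (k + 1),
            (f (((a + min i j + k : ℕ) : ℝ) / n) - f (((a + max i j : ℕ) : ℝ) / n)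
              - P * (((min i j + k - max i j : ℕ) : ℝ) / n)) := by
      rw [hTdef, hKcdef]
      simp only [Finset.sum_sub_distrib, ← Finset.mul_sum, ← Finset.sum_div]
    rw [hsplit]
    calc |∑ i ∈ range (k + 1), ∑ j ∈ range (k + 1),
          (f (((a + min i j + k : ℕ) : ℝ) / n) - f (((a + max i j : ℕ) : ℝ) / n)
            - P * (((min i j + k - max i j : ℕ) : ℝ) / n))|
        ≤ ∑ i ∈ range (k + 1), |∑ j ∈ range (k + 1),
            (f (((a + min i j + k : ℕ) : ℝ) / n) - f (((a + max i j : ℕ) : ℝ) / n)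
              - P * (((min i j + k - max i j : ℕ) : ℝ) / n))| :=
          Finset.abs_sum_le_sum_abs _ _
      _ ≤ ∑ i ∈ range (k + 1), ∑ j ∈ range (k + 1),
            |f (((a + min i j + k : ℕ) : ℝ) / n) - f (((a + max i j : ℕ) : ℝ) / n)
              - P * (((min i j + k - max i j : ℕ) : ℝ) / n)| :=
          Finset.sum_le_sum fun i _ => Finset.abs_sum_le_sum_abs _ _
      _ ≤ ∑ i ∈ range (k + 1), ∑ j ∈ range (k + 1),
            ((L : ℝ) * (2 * c / sn) * ((k : ℝ) / n)) :=
          Finset.sum_le_sum fun i hi => Finset.sum_le_sum fun j hj => hterm i hi j hj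
      _ = ((k : ℝ) + 1) ^ 2 * ((L : ℝ) * (2 * c / sn) * ((k : ℝ) / n)) := by
          simp [Finset.sum_const, Finset.card_range]
          push_cast
          ring
  have hb1 : sn⁻¹ * |T - P * (Kc / n)| ≤ 8 * (L : ℝ) * c ^ 4 / sn := by
    have hLC : (0 : ℝ) ≤ 2 * (L : ℝ) * c := by positivity
    have key1 : ((k : ℝ) + 1) ^ 2 * ((L : ℝ) * (2 * c / sn) * ((k : ℝ) / n))
        ≤ 8 * (L : ℝ) * c ^ 4 := by
      have e : ((k : ℝ) + 1) ^ 2 * ((L : ℝ) * (2 * c / sn) * ((k : ℝ) / (n : ℝ)))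
          = 2 * (L : ℝ) * c * (((k : ℝ) + 1) ^ 2 * (k : ℝ)) / (sn * (sn * sn)) := by
        rw [← hsn]; field_simp
      rw [e, div_le_iff₀ (by positivity)]
      have h4 : ((k : ℝ) + 1) ^ 2 * (k : ℝ) ≤ 4 * (c * sn) ^ 3 := key_poly_up hkr1 hkub
      have h5 := mul_le_mul_of_nonneg_left h4 hLC
      have e3 : 2 * (L : ℝ) * c * (4 * (c * sn) ^ 3) = 8 * (L : ℝ) * c ^ 4 * (sn * (sn * sn)) := by
        ring
      linarith [h5, e3]
    calc sn⁻¹ * |T - P * (Kc / n)|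
        ≤ sn⁻¹ * (((k : ℝ) + 1) ^ 2 * ((L : ℝ) * (2 * c / sn) * ((k : ℝ) / n))) :=
          mul_le_mul_of_nonneg_left hsum1 (inv_nonneg.mpr hsn0.le)
      _ ≤ sn⁻¹ * (8 * (L : ℝ) * c ^ 4) :=
          mul_le_mul_of_nonneg_left key1 (inv_nonneg.mpr hsn0.le)
      _ = 8 * (L : ℝ) * c ^ 4 / sn := by rw [mul_comm, div_eq_mul_inv]
  have hb2 : |sn⁻¹ * (Kc / n) - 2 * c ^ 3 / 3| ≤ 4 * c ^ 2 / sn := by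
    have e : sn⁻¹ * (Kc / (n : ℝ)) - 2 * c ^ 3 / 3
        = ((k : ℝ) * ((k : ℝ) + 1) * (2 * (k : ℝ) + 1) - 2 * c ^ 3 * (sn * (sn * sn)))
          / (3 * (sn * (sn * sn))) := by
      rw [hKc, ← hsn]; field_simp
    rw [e, abs_div, abs_of_pos (by positivity : (0 : ℝ) < 3 * (sn * (sn * sn))),
      div_le_iff₀ (by positivity)]
    have hrhs : 4 * c ^ 2 / sn * (3 * (sn * (sn * sn))) = 12 * c ^ 2 * (sn * sn) := by
      field_simp; ring
    rw [hrhs, abs_le]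
    have e2 : (c * sn) ^ 2 = c ^ 2 * (sn * sn) := by ring
    have e3 : (c * sn) ^ 3 = c ^ 3 * (sn * (sn * sn)) := by ring
    constructor
    · have := cube_poly_lo hkr1 hklb hcs
      linarith [this, e2, e3]
    · have := cube_poly_up hkr1 hkub hcs
      linarith [this, e2, e3]
  -- final assembly
  rw [hidx, hpow, hTval]
  have hdecomp : sn⁻¹ * T - 2 * c ^ 3 / 3 * P
      = sn⁻¹ * (T - P * (Kc / n)) + P * (sn⁻¹ * (Kc / n) - 2 * c ^ 3 / 3) := by ring
  rw [hdecomp]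
  calc |sn⁻¹ * (T - P * (Kc / n)) + P * (sn⁻¹ * (Kc / n) - 2 * c ^ 3 / 3)|
      ≤ |sn⁻¹ * (T - P * (Kc / n))| + |P * (sn⁻¹ * (Kc / n) - 2 * c ^ 3 / 3)| := abs_add_le _ _
    _ ≤ 8 * (L : ℝ) * c ^ 4 / sn + B * (4 * c ^ 2 / sn) := by
        have h1 : |sn⁻¹ * (T - P * (Kc / n))| = sn⁻¹ * |T - P * (Kc / n)| := by
          rw [abs_mul, abs_of_nonneg (inv_nonneg.mpr hsn0.le)]
        have h2 : |P * (sn⁻¹ * (Kc / n) - 2 * c ^ 3 / 3)| ≤ B * (4 * c ^ 2 / sn) := by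
          rw [abs_mul]; exact mul_le_mul hP hb2 (abs_nonneg _) hB0
        rw [h1]
        linarith [hb1]
    _ < ε := by
        have e : 8 * (L : ℝ) * c ^ 4 / sn + B * (4 * c ^ 2 / sn)
            = (8 * (L : ℝ) * c ^ 4 + 4 * c ^ 2 * B) / sn := by
          field_simp
        rw [e]
        have hlt : (8 * (L : ℝ) * c ^ 4 + 4 * c ^ 2 * B) / sn < C / sn := by
          apply (div_lt_div_iff_of_pos_right hsn0).mpr
          rw [hCdef]; linarith
        linarith [hCe]


end DepNoise
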